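/- For every α ∈ [0,1], the set Γ ∪ P, where P := {(0, t) ∈ ℝ² : t ≥ 0} is the vertical half-line, is α-sliding minimal (with n = 2, d = 1) in the half-plane ℝ²₊ with sliding boundary Γ. -/

import Mathlib

open MeasureTheory Set

noncomputable section

/-- The functional `J_α(E) = H^d(E \ Γ) + α · H^d(E ∩ Γ)`. -/
def slidingJ (n : ℕ) (d α : ℝ) (G E : Set (EuclideanSpace ℝ (Fin n))) : ENNReal :=
  μH[d] (E \ G) + ENNReal.ofReal α * μH[d] (E ∩ G)

/-- `F` is a sliding competitor of `E` in `Ω` with sliding boundary `G`: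
`F = φ₁(E)` for a continuous one-parameter family `φ : [0,1] × E → Ω` with `φ₀ = id`,
`φ₁` Lipschitz, preserving `G`, and whose moving part is confined to a compact set. -/
def IsSlidingCompetitor (n : ℕ) (Ω G E F : Set (EuclideanSpace ℝ (Fin n))) : Prop :=
  ∃ φ : ℝ → EuclideanSpace ℝ (Fin n) → EuclideanSpace ℝ (Fin n),
    ContinuousOn (fun q : ℝ × EuclideanSpace ℝ (Fin n) => φ q.1 q.2) (Icc (0:ℝ) 1 ×ˢ E) ∧
    (∀ x ∈ E, φ 0 x = x) ∧
    (∃ L : NNReal, LipschitzOnWith L (φ 1) E) ∧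
    (∀ t ∈ Icc (0:ℝ) 1, ∀ x ∈ E, φ t x ∈ Ω) ∧
    (∀ t ∈ Icc (0:ℝ) 1, ∀ x ∈ E ∩ G, φ t x ∈ G) ∧
    (∃ K : Set (EuclideanSpace ℝ (Fin n)), IsCompact K ∧
       ∀ t ∈ Icc (0:ℝ) 1, ∀ x ∈ E, (∃ s ∈ Icc (0:ℝ) 1, φ s x ≠ x) → φ t x ∈ K) ∧
    F = φ 1 '' E

/-- `E ⊆ Ω` is `α`-sliding minimal of dimension `d` in `Ω` with sliding boundary `G`:
`J_α(E \ F) ≤ J_α(F \ E)` for every sliding competitor `F` of `E`. -/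
def SlidingMinimal (n : ℕ) (d α : ℝ) (Ω G E : Set (EuclideanSpace ℝ (Fin n))) : Prop :=
  ∀ F : Set (EuclideanSpace ℝ (Fin n)), IsSlidingCompetitor n Ω G E F →
    slidingJ n d α G (E \ F) ≤ slidingJ n d α G (F \ E)

/-- The cone over a set: `cone(A) = {λ a : λ ≥ 0, a ∈ A}`. -/
def coneOver (n : ℕ) (A : Set (EuclideanSpace ℝ (Fin n))) : Set (EuclideanSpace ℝ (Fin n)) :=
  {x | ∃ lam : ℝ, 0 ≤ lam ∧ ∃ a ∈ A, x = lam • a}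

/-- The point of `ℝ²` with coordinates `(a, b)`. -/
def e2 (a b : ℝ) : EuclideanSpace ℝ (Fin 2) := (EuclideanSpace.equiv (Fin 2) ℝ).symm ![a, b]

/-- The sliding boundary `Γ = {y = 0}` of the half-plane. -/
def Gamma2 : Set (EuclideanSpace ℝ (Fin 2)) := {x | x 1 = 0}

/-- The closed upper half-plane `ℝ²₊ = {y ≥ 0}`. -/
def halfPlane : Set (EuclideanSpace ℝ (Fin 2)) := {x | 0 ≤ x 1}

/-- The vertical half-line `P = {(0, t) : t ≥ 0}`. -/
def vertHalfLine : Set (EuclideanSpace ℝ (Fin 2)) := {p | ∃ t : ℝ, 0 ≤ t ∧ p = e2 0 t}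

/-- The cone of type (iv): the union of the half-line `{(t,0) : t ≤ 0}` lying on `Γ`
with the half-line from the origin making angle `θ_α = arccos α` with `Γ`. -/
def Dcone (α : ℝ) : Set (EuclideanSpace ℝ (Fin 2)) :=
  {p | ∃ t : ℝ, t ≤ 0 ∧ p = e2 t 0} ∪
  {p | ∃ t : ℝ, 0 ≤ t ∧ p = t • e2 (Real.cos (Real.arccos α)) (Real.sin (Real.arccos α))}

/-- The cone `V_θ`: two half-lines from the origin, symmetric with respect to the
vertical axis, each making angle `θ` with `Γ`. -/
def Vcone (θ : ℝ) : Set (EuclideanSpace ℝ (Fin 2)) :=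
  {p | ∃ t : ℝ, 0 ≤ t ∧ p = t • e2 (Real.cos θ) (Real.sin θ)} ∪
  {p | ∃ t : ℝ, 0 ≤ t ∧ p = t • e2 (-Real.cos θ) (Real.sin θ)}

/-- The reflection `(x, y) ↦ (−x, y)`. -/
def refl2 (p : EuclideanSpace ℝ (Fin 2)) : EuclideanSpace ℝ (Fin 2) :=
  e2 (-(p 0)) (p 1)

/-! ### Auxiliary lemmas -/

lemma e2_apply0 (a b : ℝ) : e2 a b 0 = a := rfl
lemma e2_apply1 (a b : ℝ) : e2 a b 1 = b := rfl

lemma ext2 (x : EuclideanSpace ℝ (Fin 2)) : x = e2 (x 0) (x 1) := by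
  ext i; fin_cases i <;> rfl

lemma abs_coord_le (x : EuclideanSpace ℝ (Fin 2)) (i : Fin 2) : |x i| ≤ ‖x‖ := by
  rw [EuclideanSpace.norm_eq]
  have h1 : |x i| = Real.sqrt (‖x i‖^2) := by
    rw [Real.sqrt_sq_eq_abs]; simp [abs_abs]
  rw [h1]
  apply Real.sqrt_le_sqrt
  exact Finset.single_le_sum (f := fun j => ‖x j‖^2) (fun j _ => sq_nonneg _) (Finset.mem_univ i)

lemma coord_lipschitz (i : Fin 2) :
    LipschitzWith 1 (fun x : EuclideanSpace ℝ (Fin 2) => x i) := by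
  apply LipschitzWith.of_dist_le_mul
  intro x y
  rw [NNReal.coe_one, one_mul]
  have : dist (x i) (y i) = |(x - y) i| := by simp [Real.dist_eq]
  rw [this, dist_eq_norm]
  exact abs_coord_le _ _

lemma j_isometry : Isometry (fun t : ℝ => e2 0 t) := by
  apply Isometry.of_dist_eq
  intro s t
  rw [dist_eq_norm, dist_eq_norm]
  have h : e2 0 s - e2 0 t = e2 0 (s - t) := by
    ext i; fin_cases i <;> simp [e2]
  rw [h, EuclideanSpace.norm_eq]
  simp [Fin.sum_univ_two, e2_apply0, e2_apply1]
  exact Real.sqrt_sq_eq_abs _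

lemma norm_e2_left (a : ℝ) : ‖e2 a 0‖ = |a| := by
  rw [EuclideanSpace.norm_eq]
  simp [Fin.sum_univ_two, e2_apply0, e2_apply1]
  exact Real.sqrt_sq_eq_abs _

lemma norm_e2_right (b : ℝ) : ‖e2 0 b‖ = |b| := by
  rw [EuclideanSpace.norm_eq]
  simp [Fin.sum_univ_two, e2_apply0, e2_apply1]
  exact Real.sqrt_sq_eq_abs _

lemma gamma2_convex : Convex ℝ Gamma2 := by
  intro x hx y hy a b _ _ _
  have : (a • x + b • y) 1 = a * x 1 + b * y 1 := rfl
  simp only [Gamma2, mem_setOf_eq] at *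
  rw [this, hx, hy]; ring

lemma vertHalfLine_eq : vertHalfLine = (fun t : ℝ => e2 0 t) '' Ici 0 := by
  ext p
  constructor
  · rintro ⟨t, ht, rfl⟩; exact ⟨t, ht, rfl⟩
  · rintro ⟨t, ht, rfl⟩; exact ⟨t, ht, rfl⟩


/-- For every `α ∈ [0,1]`, the set `Γ ∪ P`, where `P = {(0,t) : t ≥ 0}` is the vertical
half-line, is `α`-sliding minimal (n = 2, d = 1) in the half-plane `ℝ²₊` with sliding
boundary `Γ`. -/
theorem gammaUnionVert_slidingMinimal (α : ℝ) (hα : α ∈ Icc (0:ℝ) 1) :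
    SlidingMinimal 2 1 α halfPlane Gamma2 (Gamma2 ∪ vertHalfLine) := by
  intro F hF
  obtain ⟨φ, hφc, hφ0, ⟨L, hL⟩, hΩ, hGmap, ⟨K, hK, hKmem⟩, hFeq⟩ := hF
  set E : Set (EuclideanSpace ℝ (Fin 2)) := Gamma2 ∪ vertHalfLine with hE
  set f : EuclideanSpace ℝ (Fin 2) → EuclideanSpace ℝ (Fin 2) := φ 1 with hf
  subst hFeq
  have h1mem : (1:ℝ) ∈ Icc (0:ℝ) 1 := ⟨zero_le_one, le_refl 1⟩
  have hEG : Gamma2 ⊆ E := subset_union_left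
  have hEP : vertHalfLine ⊆ E := subset_union_right
  have hfc : ContinuousOn f E := hL.continuousOn
  have hmovK : ∀ x ∈ E, f x ≠ x → x ∈ K := by
    intro x hx hne
    have h0 : φ 0 x ∈ K :=
      hKmem 0 ⟨le_refl 0, zero_le_one⟩ x hx ⟨1, h1mem, hne⟩
    rwa [hφ0 x hx] at h0
  have hfix : ∀ x ∈ E, x ∉ K → f x = x := by
    intro x hx hxK
    by_contra hne
    exact hxK (hmovK x hx hne)
  obtain ⟨R₀, hR₀⟩ := hK.isBounded.subset_closedBall 0
  have hKnorm : ∀ x ∈ K, ‖x‖ ≤ R₀ := fun x hx => mem_closedBall_zero_iff.mp (hR₀ hx)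
  set R : ℝ := max R₀ 0 + 1 with hRdef
  have hR₀R : R₀ < R := lt_of_le_of_lt (le_max_left _ _) (lt_add_one _)
  have hRpos : 0 < R := lt_of_le_of_lt (le_max_right _ _) (lt_add_one _)
  have hfG : ∀ x ∈ Gamma2, f x ∈ Gamma2 := fun x hx => hGmap 1 h1mem x ⟨hEG hx, hx⟩
  -- `Γ ⊆ F`
  have hGammaF : Gamma2 ⊆ f '' E := by
    have hconnΓ : IsPreconnected (f '' Gamma2) :=
      gamma2_convex.isPreconnected.image f (hfc.mono hEG)
    have hconnX :
        IsPreconnected ((fun y : EuclideanSpace ℝ (Fin 2) => y 0) '' (f '' Gamma2)) :=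
      hconnΓ.image _ (coord_lipschitz 0).continuous.continuousOn
    have hmemR : ∀ a : ℝ, |a| = R → a ∈ (fun y : EuclideanSpace ℝ (Fin 2) => y 0) '' (f '' Gamma2) := by
      intro a ha
      have hpΓ : e2 a 0 ∈ Gamma2 := rfl
      have hpK : e2 a 0 ∉ K := by
        intro hmem
        have := hKnorm _ hmem
        rw [norm_e2_left, ha] at this
        exact absurd this (not_le.mpr hR₀R)
      have hfp : f (e2 a 0) = e2 a 0 := hfix _ (hEG hpΓ) hpK
      exact ⟨e2 a 0, ⟨e2 a 0, hpΓ, hfp⟩, rfl⟩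
    have hmem1 : (-R) ∈ (fun y : EuclideanSpace ℝ (Fin 2) => y 0) '' (f '' Gamma2) :=
      hmemR (-R) (by rw [abs_neg, abs_of_pos hRpos])
    have hmem2 : R ∈ (fun y : EuclideanSpace ℝ (Fin 2) => y 0) '' (f '' Gamma2) :=
      hmemR R (abs_of_pos hRpos)
    have hseg : Icc (-R) R ⊆ (fun y : EuclideanSpace ℝ (Fin 2) => y 0) '' (f '' Gamma2) :=
      hconnX.Icc_subset hmem1 hmem2
    intro g hg
    by_cases hcase : |g 0| ≤ R
    · have hmem : g 0 ∈ Icc (-R) R := abs_le.mp hcase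
      obtain ⟨y, hy, hy0⟩ := hseg hmem
      obtain ⟨z, hzΓ, hzy⟩ := hy
      have hyΓ : y ∈ Gamma2 := by rw [← hzy]; exact hfG z hzΓ
      have hgy : g = y := by
        have hy0' : y 0 = g 0 := hy0
        have hg1 : g 1 = 0 := hg
        have hy1 : y 1 = 0 := hyΓ
        rw [ext2 g, ext2 y, hy0', hg1, hy1]
      rw [hgy, ← hzy]
      exact mem_image_of_mem f (hEG hzΓ)
    · have hgK : g ∉ K := by
        intro hmem
        exact hcase (le_trans (abs_coord_le g 0) (le_trans (hKnorm g hmem) hR₀R.le))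
      have : f g = g := hfix g (hEG hg) hgK
      rw [← this]
      exact mem_image_of_mem f (hEG hg)
  -- segment of heights achieved by `f '' P`
  have hsegY : Icc (0:ℝ) R ⊆ (fun y : EuclideanSpace ℝ (Fin 2) => y 1) '' (f '' vertHalfLine) := by
    have hconnP : IsPreconnected (f '' vertHalfLine) := by
      have h1 : IsPreconnected vertHalfLine := by
        rw [vertHalfLine_eq]
        exact isPreconnected_Ici.image _ j_isometry.continuous.continuousOn
      exact h1.image f (hfc.mono hEP)
    have hconnY :
        IsPreconnected ((fun y : EuclideanSpace ℝ (Fin 2) => y 1) '' (f '' vertHalfLine)) :=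
      hconnP.image _ (coord_lipschitz 1).continuous.continuousOn
    have h0P : e2 0 0 ∈ vertHalfLine := ⟨0, le_refl 0, rfl⟩
    have h0mem : (0:ℝ) ∈ (fun y : EuclideanSpace ℝ (Fin 2) => y 1) '' (f '' vertHalfLine) := by
      have : f (e2 0 0) ∈ Gamma2 := hfG (e2 0 0) rfl
      exact ⟨f (e2 0 0), mem_image_of_mem f h0P, this⟩
    have hRP : e2 0 R ∈ vertHalfLine := ⟨R, hRpos.le, rfl⟩
    have hRK : e2 0 R ∉ K := by
      intro hmem
      have := hKnorm _ hmem
      rw [norm_e2_right, abs_of_pos hRpos] at this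
      exact absurd this (not_le.mpr hR₀R)
    have hRmem : R ∈ (fun y : EuclideanSpace ℝ (Fin 2) => y 1) '' (f '' vertHalfLine) := by
      refine ⟨f (e2 0 R), mem_image_of_mem f hRP, ?_⟩
      show f (e2 0 R) 1 = R
      rw [hfix _ (hEP hRP) hRK, e2_apply1]
    exact hconnY.Icc_subset h0mem hRmem
  -- every point of `(E \ F) \ Γ` is on `P` and its height is achieved in `F \ E`
  have hAP : ∀ x ∈ (E \ f '' E) \ Gamma2, x = e2 0 (x 1) := by
    rintro x ⟨⟨hxE, _⟩, hxΓ⟩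
    rcases hxE with hxΓ' | hxP
    · exact absurd hxΓ' hxΓ
    · obtain ⟨t, _, rfl⟩ := hxP
      rfl
  have hmain : ∀ x ∈ (E \ f '' E) \ Gamma2,
      ∃ q ∈ (f '' E) \ E, q 1 = x 1 := by
    rintro x hx
    obtain ⟨⟨hxE, hxF⟩, hxΓ⟩ := hx
    have hx1pos : 0 < x 1 := by
      rcases hxE with h | ⟨t, ht, rfl⟩
      · exact absurd h hxΓ
      · rw [e2_apply1]
        rcases lt_or_eq_of_le ht with h | h
        · exact h
        · exact absurd (show (e2 0 t) ∈ Gamma2 by rw [← h]; rfl) hxΓ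
    have hxK : x ∈ K := by
      apply hmovK x hxE
      intro heq
      exact hxF ⟨x, hxE, heq⟩
    have hx1R : x 1 ≤ R := by
      have h1 : x 1 ≤ |x 1| := le_abs_self _
      exact le_trans (le_trans h1 (le_trans (abs_coord_le x 1) (hKnorm x hxK))) hR₀R.le
    obtain ⟨q, hqF, hq1⟩ := hsegY ⟨hx1pos.le, hx1R⟩
    refine ⟨q, ⟨image_mono (f := f) hEP hqF, ?_⟩, hq1⟩
    rintro (hqΓ | hqP)
    · have hq1' : q 1 = x 1 := hq1
      have hq0 : q 1 = 0 := hqΓ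
      rw [hq0] at hq1'
      exact absurd hq1'.symm (ne_of_gt hx1pos)
    · have hq1'' : q 1 = x 1 := hq1
      have hq1' : q = e2 0 (q 1) := by
        obtain ⟨t, _, rfl⟩ := hqP; rfl
      have hqx : q = x := by
        rw [hq1', hq1'', ← hAP x ⟨⟨hxE, hxF⟩, hxΓ⟩]
      rw [hqx] at hqF
      exact hxF (image_mono (f := f) hEP hqF)
  -- measure estimates
  have hAΓ : (E \ f '' E) ∩ Gamma2 = ∅ := by
    ext x
    simp only [mem_inter_iff, mem_diff, mem_empty_iff_false, iff_false, not_and]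
    rintro ⟨_, hxF⟩ hxΓ
    exact hxF (hGammaF hxΓ)
  have hFΓ : (f '' E \ E) ∩ Gamma2 = ∅ := by
    ext x
    simp only [mem_inter_iff, mem_diff, mem_empty_iff_false, iff_false, not_and]
    rintro ⟨_, hxE⟩ hxΓ
    exact hxE (hEG hxΓ)
  have hFdiff : (f '' E \ E) \ Gamma2 = f '' E \ E := by
    ext x
    simp only [mem_diff]
    constructor
    · rintro ⟨h, _⟩; exact h
    · intro h
      refine ⟨h, fun hxΓ => ?_⟩
      have : x ∈ (f '' E \ E) ∩ Gamma2 := ⟨h, hxΓ⟩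
      rw [hFΓ] at this
      exact this
  unfold slidingJ
  rw [hAΓ, hFΓ, measure_empty, mul_zero, add_zero, add_zero, hFdiff]
  set A := (E \ f '' E) \ Gamma2 with hA
  have hAeq : A = (fun t : ℝ => e2 0 t) '' ((fun y : EuclideanSpace ℝ (Fin 2) => y 1) '' A) := by
    ext x
    constructor
    · intro hx
      exact ⟨x 1, ⟨x, hx, rfl⟩, (hAP x hx).symm⟩
    · rintro ⟨t, ⟨y, hy, rfl⟩, rfl⟩
      show e2 0 (y 1) ∈ A
      rw [← hAP y hy]; exact hy
  have hS : (fun y : EuclideanSpace ℝ (Fin 2) => y 1) '' A ⊆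
      (fun y : EuclideanSpace ℝ (Fin 2) => y 1) '' (f '' E \ E) := by
    rintro t ⟨x, hx, rfl⟩
    obtain ⟨q, hq, hq1⟩ := hmain x hx
    exact ⟨q, hq, hq1⟩
  calc μH[(1:ℝ)] A = μH[(1:ℝ)] ((fun y : EuclideanSpace ℝ (Fin 2) => y 1) '' A) := by
        conv_lhs => rw [hAeq]
        exact j_isometry.hausdorffMeasure_image (Or.inl zero_le_one) _
    _ ≤ μH[(1:ℝ)] ((fun y : EuclideanSpace ℝ (Fin 2) => y 1) '' (f '' E \ E)) :=
        measure_mono hS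
    _ ≤ μH[(1:ℝ)] (f '' E \ E) := by
        simpa using (coord_lipschitz 1).hausdorffMeasure_image_le zero_le_one (f '' E \ E)
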